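/- If F is a nondecreasing, differentiable, concave function on [0, +∞), then the map φ(u) = (F(√u) - F(0))² is concave on [0, +∞). -/

import Mathlib

open Set Real

theorem stmt10 (F : ℝ → ℝ)
    (hmono : MonotoneOn F (Set.Ici 0))
    (hdiff : DifferentiableOn ℝ F (Set.Ici 0))
    (hconc : ConcaveOn ℝ (Set.Ici 0) F) :
    ConcaveOn ℝ (Set.Ici 0) (fun u => (F (Real.sqrt u) - F 0) ^ 2) := by
  -- differentiability of F at positive points
  have hFd : ∀ t : ℝ, 0 < t → DifferentiableAt ℝ F t := fun t ht =>
    hdiff.differentiableAt (Ici_mem_nhds ht)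
  -- derivative of φ at positive points
  have hder : ∀ u : ℝ, 0 < u →
      HasDerivAt (fun u => (F (Real.sqrt u) - F 0) ^ 2)
        (2 * (F (Real.sqrt u) - F 0) ^ 1 * (deriv F (Real.sqrt u) * (1 / (2 * Real.sqrt u)))) u := by
    intro u hu
    have hs : HasDerivAt Real.sqrt (1 / (2 * Real.sqrt u)) u := Real.hasDerivAt_sqrt hu.ne'
    have hF : HasDerivAt F (deriv F (Real.sqrt u)) (Real.sqrt u) :=
      (hFd _ (Real.sqrt_pos.2 hu)).hasDerivAt
    exact ((hF.comp u hs).sub_const (F 0)).pow 2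
  refine AntitoneOn.concaveOn_of_deriv (convex_Ici 0) ?_ ?_ ?_
  · -- continuity
    have : ContinuousOn F (Set.Ici 0) := hdiff.continuousOn
    exact ((this.comp Real.continuous_sqrt.continuousOn
      (fun x hx => Real.sqrt_nonneg x)).sub continuousOn_const).pow 2
  · -- differentiability on interior
    rw [interior_Ici]
    exact fun u hu => ((hder u hu).differentiableAt).differentiableWithinAt
  · -- antitone derivative
    rw [interior_Ici]
    have hconc' : ConcaveOn ℝ (Set.Ioi 0) F := hconc.subset Set.Ioi_subset_Ici_self (convex_Ioi 0)
    have hanti : AntitoneOn (deriv F) (Set.Ioi 0) :=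
      hconc'.antitoneOn_deriv (fun t ht => hFd t ht)
    have hdnn : ∀ t : ℝ, 0 < t → 0 ≤ deriv F t := by
      intro t ht
      have h1 : slope F t (t + 1) ≤ deriv F t :=
        hconc.slope_le_deriv (le_of_lt ht) (show (t+1:ℝ) ∈ Set.Ici 0 by simp; linarith) (by linarith) (hFd t ht)
      have h2 : 0 ≤ slope F t (t + 1) := by
        rw [slope_def_field]
        have := hmono ht.le (show (t + 1 : ℝ) ∈ Set.Ici 0 by simp; linarith) (by linarith)
        have : (0:ℝ) ≤ F (t+1) - F t := by linarith
        rw [div_eq_mul_inv]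
        apply mul_nonneg this
        simp
      linarith
    have hslope : AntitoneOn (slope F 0) (Set.Ioi 0) := by
      have := hconc.slope_anti (Set.self_mem_Ici)
      exact this.mono (fun t ht => ⟨Set.mem_Ici.2 (le_of_lt ht), ne_of_gt ht⟩)
    have hslopenn : ∀ t : ℝ, 0 < t → 0 ≤ slope F 0 t := by
      intro t ht
      rw [slope_def_field]
      have := hmono Set.self_mem_Ici ht.le ht.le
      have h : (0:ℝ) ≤ F t - F 0 := by linarith
      have : (0:ℝ) ≤ (t - 0)⁻¹ := inv_nonneg.2 (by linarith)
      rw [div_eq_mul_inv]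
      exact mul_nonneg h this
    intro a ha b hb hab
    rw [(hder a ha).deriv, (hder b hb).deriv]
    have hsa : 0 < Real.sqrt a := Real.sqrt_pos.2 ha
    have hsb : 0 < Real.sqrt b := Real.sqrt_pos.2 hb
    have hsab : Real.sqrt a ≤ Real.sqrt b := Real.sqrt_le_sqrt hab
    have key : slope F 0 (Real.sqrt b) * deriv F (Real.sqrt b)
        ≤ slope F 0 (Real.sqrt a) * deriv F (Real.sqrt a) :=
      mul_le_mul (hslope hsa hsb hsab) (hanti hsa hsb hsab) (hdnn _ hsb) (hslopenn _ hsa)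
    have ea : ∀ t : ℝ, 0 < t → 2 * (F t - F 0) ^ 1 * (deriv F t * (1 / (2 * t)))
        = slope F 0 t * deriv F t := by
      intro t ht
      rw [slope_def_field]
      field_simp
      rw [sub_zero, mul_div_cancel_right₀ _ ht.ne']
    rw [ea _ hsa, ea _ hsb]
    exact key
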